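/- Let U be a quasitriangular Hopf algebra over a field k with R-matrix R = R'ᵢ ⊗ R''ᵢ. Then the Drinfeld map Φ : U* ⊇ O → U, Φ(φ) = (φ ⊗ id)(R₂₁R) (where R₂₁ = R''ᵢ ⊗ R'ᵢ), is an algebra morphism from the transmutation product ⊙ on O, given by φ ⊙ ψ = (R'ᵢ ▷ φ ◁ R'ⱼ)(ψ ◁ S(R''ᵢ)R''ⱼ), to the product of U. Equivalently Φ(φ ⊙ ψ) = Φ(φ)Φ(ψ), and moreover Φ intertwines the coadjoint action on O with the adjoint action on U: Φ(h₍₂₎ ▷ φ ◁ S(h₍₁₎)) = h₍₁₎ Φ(φ) S(h₍₂₎). -/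

import Mathlib

open Coalgebra TensorProduct

universe w

section

variable {k U : Type*} [Field k] [Ring U] [HopfAlgebra k U]
variable {ι : Type*} [Fintype ι]

/-- Convolution product of two linear functionals on a coalgebra:
`(f * g)(x) = f(x₍₁₎) g(x₍₂₎)`. -/
noncomputable def convDual (f g : Module.Dual k U) : Module.Dual k U :=
  LinearMap.mul' k k ∘ₗ TensorProduct.map f g ∘ₗ Coalgebra.comul

/-- The Drinfeld map `Φ(φ) = (φ ⊗ id)(R₂₁ R)`, for the R-matrix
`R = ∑ᵢ R₁ i ⊗ R₂ i`:  `Φ(φ) = ∑ᵢⱼ φ(R''ᵢ R'ⱼ) R'ᵢ R''ⱼ`. -/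
noncomputable def drinfeldMap (R₁ R₂ : ι → U) (φ : Module.Dual k U) : U :=
  ∑ i : ι, ∑ j : ι, φ (R₂ i * R₁ j) • (R₁ i * R₂ j)

/-- The transmutation product on the dual:
`φ ⊙ ψ = (R'ᵢ ▷ φ ◁ R'ⱼ) · (ψ ◁ S(R''ᵢ)R''ⱼ)` (with implicit sums over `i, j`), where
`(h ▷ φ)(x) = φ(xh)`, `(φ ◁ h)(x) = φ(hx)` and `·` is the convolution product. -/
noncomputable def transmuteMul (R₁ R₂ : ι → U) (φ ψ : Module.Dual k U) :
    Module.Dual k U :=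
  ∑ i : ι, ∑ j : ι,
    convDual (φ ∘ₗ LinearMap.mulLeft k (R₁ j) ∘ₗ LinearMap.mulRight k (R₁ i))
      (ψ ∘ₗ LinearMap.mulLeft k (HopfAlgebra.antipode (R := k) (R₂ i) * R₂ j))

namespace DrinfeldPf

local notation "aS" => HopfAlgebra.antipode (R := k)


/-- Reindex a representation by `ULift (Fin n)`, to land in an arbitrary universe. -/
noncomputable def reprShrink {a : U} {κ : Type*} (s : Coalgebra.Repr k a κ) :
    Coalgebra.Repr k a (ULift.{w} (Fin s.index.card)) where
  index := Finset.univ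
  left := fun i => s.left ((Equiv.ulift.trans s.index.equivFin.symm) i)
  right := fun i => s.right ((Equiv.ulift.trans s.index.equivFin.symm) i)
  eq := by
    rw [← s.eq]
    rw [Fintype.sum_equiv (Equiv.ulift.trans s.index.equivFin.symm)
      _ (fun m => s.left m ⊗ₜ[k] s.right m) (fun i => rfl)]
    show ∑ m : {x // x ∈ s.index}, s.left ↑m ⊗ₜ[k] s.right ↑m = _
    exact Finset.sum_coe_sort s.index (fun x => s.left x ⊗ₜ[k] s.right x)



variable (k) in
/-- `a ⊗ (v₁ ⊗ v₂) ↦ (a v₁) ⊗ v₂ = (a ⊗ 1) * v`. -/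
noncomputable def zeta : U ⊗[k] (U ⊗[k] U) →ₗ[k] U ⊗[k] U :=
  (LinearMap.mul' k U).rTensor U ∘ₗ (TensorProduct.assoc k U U U).symm.toLinearMap

lemma zeta_tmul (a : U) (V : U ⊗[k] U) :
    zeta k (a ⊗ₜ[k] V) = (a ⊗ₜ[k] (1:U)) * V := by
  induction V using TensorProduct.induction_on with
  | zero => simp only [tmul_zero, map_zero, mul_zero]
  | tmul b c => simp [zeta, Algebra.TensorProduct.tmul_mul_tmul]
  | add u v hu hv => simp only [tmul_add, map_add, mul_add, hu, hv]

variable (k) in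
noncomputable def xiMap (Q : U ⊗[k] U) : U ⊗[k] (U ⊗[k] U) →ₗ[k] U ⊗[k] U :=
  zeta k ∘ₗ (LinearMap.mul' k (U ⊗[k] U)).lTensor U ∘ₗ
    TensorProduct.map (HopfAlgebra.antipode (R := k))
      (TensorProduct.map ((LinearMap.mulRight k Q) ∘ₗ Coalgebra.comul)
        ((TensorProduct.mk k U U 1) ∘ₗ HopfAlgebra.antipode (R := k)))

lemma xiMap_tmul (Q : U ⊗[k] U) (x y z : U) :
    xiMap k Q (x ⊗ₜ[k] (y ⊗ₜ[k] z)) =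
      (aS x ⊗ₜ[k] (1:U)) * (comul y * Q * ((1:U) ⊗ₜ[k] aS z)) := by
  simp [xiMap, zeta_tmul]



lemma sum_counit_right_smul {y : U} {κ : Type*} (s : Repr k y κ) :
    ∑ n ∈ s.index, (counit (R := k) (s.right n)) • s.left n = y := by
  have h := congrArg (TensorProduct.rid k U) (sum_tmul_counit_eq (R := k) s)
  simpa only [map_sum, TensorProduct.rid_tmul, one_smul] using h

lemma sum_counit_left_smul {y : U} {κ : Type*} (s : Repr k y κ) :
    ∑ n ∈ s.index, (counit (R := k) (s.left n)) • s.right n = y := by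
  have h := congrArg (TensorProduct.lid k U) (sum_counit_tmul_eq (R := k) s)
  simpa only [map_sum, TensorProduct.lid_tmul, one_smul] using h

/-- `∑ Δ(y₍₁₎) · (1 ⊗ S y₍₂₎) = y ⊗ 1`. -/
lemma L2 {y : U} {κ : Type*} (s : Repr k y κ) :
    ∑ n ∈ s.index, comul (R := k) (s.left n) * ((1:U) ⊗ₜ[k] aS (s.right n)) = y ⊗ₜ[k] (1:U) := by
  classical
  have h := sum_tmul_tmul_eq (R := k) s (fun n => ℛ k (s.left n)) (fun n => ℛ k (s.right n))
  have h2 := congrArg ((LinearMap.mul' k U ∘ₗ (HopfAlgebra.antipode (R := k)).lTensor U).lTensor U) h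
  simp only [map_sum, LinearMap.lTensor_tmul, LinearMap.coe_comp, Function.comp_apply,
    LinearMap.mul'_apply] at h2
  calc ∑ n ∈ s.index, comul (R := k) (s.left n) * ((1:U) ⊗ₜ[k] aS (s.right n))
      = ∑ n ∈ s.index, ∑ j ∈ (ℛ k (s.left n)).index,
          (ℛ k (s.left n)).left j ⊗ₜ[k] ((ℛ k (s.left n)).right j * aS (s.right n)) := by
        refine Finset.sum_congr rfl fun n _ => ?_
        rw [← (ℛ k (s.left n)).eq, Finset.sum_mul]
        simp [Algebra.TensorProduct.tmul_mul_tmul]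
    _ = ∑ n ∈ s.index, ∑ j ∈ (ℛ k (s.right n)).index,
          s.left n ⊗ₜ[k] ((ℛ k (s.right n)).left j * aS ((ℛ k (s.right n)).right j)) := h2
    _ = ∑ n ∈ s.index, (counit (R := k) (s.right n)) • (s.left n ⊗ₜ[k] (1:U)) := by
        refine Finset.sum_congr rfl fun n _ => ?_
        rw [← tmul_sum, HopfAlgebra.sum_mul_antipode_eq_smul, tmul_smul]
    _ = y ⊗ₜ[k] (1:U) := by
        simp only [smul_tmul']
        rw [← sum_tmul, sum_counit_right_smul]

/-- `∑ (S y₍₁₎ ⊗ 1) · Δ(y₍₂₎) = 1 ⊗ y`. -/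
lemma L3 {y : U} {κ : Type*} (s : Repr k y κ) :
    ∑ n ∈ s.index, (aS (s.left n) ⊗ₜ[k] (1:U)) * comul (R := k) (s.right n) = (1:U) ⊗ₜ[k] y := by
  classical
  have h := sum_tmul_tmul_eq (R := k) s (fun n => ℛ k (s.left n)) (fun n => ℛ k (s.right n))
  have h2 := congrArg (((LinearMap.mul' k U ∘ₗ (HopfAlgebra.antipode (R := k)).rTensor U).rTensor U)
      ∘ₗ (TensorProduct.assoc k U U U).symm.toLinearMap) h
  simp only [map_sum, LinearMap.coe_comp, Function.comp_apply, LinearEquiv.coe_coe,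
    TensorProduct.assoc_symm_tmul, LinearMap.rTensor_tmul, LinearMap.mul'_apply] at h2
  calc ∑ n ∈ s.index, (aS (s.left n) ⊗ₜ[k] (1:U)) * comul (R := k) (s.right n)
      = ∑ n ∈ s.index, ∑ j ∈ (ℛ k (s.right n)).index,
          (aS (s.left n) * (ℛ k (s.right n)).left j) ⊗ₜ[k] (ℛ k (s.right n)).right j := by
        refine Finset.sum_congr rfl fun n _ => ?_
        rw [← (ℛ k (s.right n)).eq, Finset.mul_sum]
        simp [Algebra.TensorProduct.tmul_mul_tmul]
    _ = ∑ n ∈ s.index, ∑ j ∈ (ℛ k (s.left n)).index,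
          ((aS ((ℛ k (s.left n)).left j) * (ℛ k (s.left n)).right j)) ⊗ₜ[k] s.right n := h2.symm
    _ = ∑ n ∈ s.index, (counit (R := k) (s.left n)) • ((1:U) ⊗ₜ[k] s.right n) := by
        refine Finset.sum_congr rfl fun n _ => ?_
        rw [← sum_tmul, HopfAlgebra.sum_antipode_mul_eq_smul, ← smul_tmul']
    _ = (1:U) ⊗ₜ[k] y := by
        simp only [← tmul_smul]
        rw [← tmul_sum, sum_counit_left_smul]



lemma star_comm (R₁ R₂ : ι → U)
    (hcomm : ∀ (x : U) {κ : Type*} (r : Coalgebra.Repr k x κ),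
      ∑ i : ι, ∑ m ∈ r.index, (R₁ i * r.left m) ⊗ₜ[k] (R₂ i * r.right m) =
      ∑ i : ι, ∑ m ∈ r.index, (r.right m * R₁ i) ⊗ₜ[k] (r.left m * R₂ i)) (x : U) :
    comul (R := k) x * (∑ i : ι, ∑ j : ι, (R₂ i * R₁ j) ⊗ₜ[k] (R₁ i * R₂ j)) =
      (∑ i : ι, ∑ j : ι, (R₂ i * R₁ j) ⊗ₜ[k] (R₁ i * R₂ j)) * comul (R := k) x := by
  classical
  have hQ : (∑ i : ι, ∑ j : ι, (R₂ i * R₁ j) ⊗ₜ[k] (R₁ i * R₂ j)) =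
      (∑ i : ι, R₂ i ⊗ₜ[k] R₁ i) * (∑ i : ι, R₁ i ⊗ₜ[k] R₂ i) := by
    simp only [Finset.sum_mul, Finset.mul_sum, Algebra.TensorProduct.tmul_mul_tmul]
    exact Finset.sum_comm
  have E1 : ∀ z : U, (∑ i : ι, R₁ i ⊗ₜ[k] R₂ i) * comul (R := k) z =
      (Algebra.TensorProduct.comm k U U) (comul (R := k) z) * (∑ i : ι, R₁ i ⊗ₜ[k] R₂ i) := by
    intro z
    have h := hcomm z (reprShrink (ℛ k z))
    calc (∑ i : ι, R₁ i ⊗ₜ[k] R₂ i) * comul (R := k) z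
        = ∑ i : ι, ∑ m ∈ (reprShrink (ℛ k z) : Coalgebra.Repr k z _).index, (R₁ i * (reprShrink (ℛ k z) : Coalgebra.Repr k z _).left m) ⊗ₜ[k] (R₂ i * (reprShrink (ℛ k z) : Coalgebra.Repr k z _).right m) := by
          rw [← (reprShrink (ℛ k z) : Coalgebra.Repr k z _).eq]
          simp only [Finset.sum_mul, Finset.mul_sum, Algebra.TensorProduct.tmul_mul_tmul]
          exact Finset.sum_comm
      _ = ∑ i : ι, ∑ m ∈ (reprShrink (ℛ k z) : Coalgebra.Repr k z _).index, ((reprShrink (ℛ k z) : Coalgebra.Repr k z _).right m * R₁ i) ⊗ₜ[k] ((reprShrink (ℛ k z) : Coalgebra.Repr k z _).left m * R₂ i) := h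
      _ = (Algebra.TensorProduct.comm k U U) (comul (R := k) z) * (∑ i : ι, R₁ i ⊗ₜ[k] R₂ i) := by
          rw [← (reprShrink (ℛ k z) : Coalgebra.Repr k z _).eq]
          simp only [map_sum, Algebra.TensorProduct.comm_tmul, Finset.sum_mul, Finset.mul_sum,
            Algebra.TensorProduct.tmul_mul_tmul]
          rw [Finset.sum_comm]
  have ccomm : ∀ w : U ⊗[k] U,
      (Algebra.TensorProduct.comm k U U) ((Algebra.TensorProduct.comm k U U) w) = w := by
    intro w
    induction w using TensorProduct.induction_on <;> simp_all
  have E2 : ∀ z : U, (∑ i : ι, R₂ i ⊗ₜ[k] R₁ i) *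
        (Algebra.TensorProduct.comm k U U) (comul (R := k) z) =
      comul (R := k) z * (∑ i : ι, R₂ i ⊗ₜ[k] R₁ i) := by
    intro z
    have h := congrArg (Algebra.TensorProduct.comm k U U) (E1 z)
    rw [map_mul, map_mul, ccomm] at h
    have hR : (Algebra.TensorProduct.comm k U U) (∑ i : ι, R₁ i ⊗ₜ[k] R₂ i)
        = ∑ i : ι, R₂ i ⊗ₜ[k] R₁ i := by simp [map_sum]
    rw [hR] at h
    exact h
  rw [hQ]
  calc comul (R := k) x * ((∑ i : ι, R₂ i ⊗ₜ[k] R₁ i) * (∑ i : ι, R₁ i ⊗ₜ[k] R₂ i))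
      = (comul (R := k) x * (∑ i : ι, R₂ i ⊗ₜ[k] R₁ i)) * (∑ i : ι, R₁ i ⊗ₜ[k] R₂ i) := by
        rw [mul_assoc]
    _ = ((∑ i : ι, R₂ i ⊗ₜ[k] R₁ i) * (Algebra.TensorProduct.comm k U U) (comul (R := k) x)) *
          (∑ i : ι, R₁ i ⊗ₜ[k] R₂ i) := by rw [E2 x]
    _ = (∑ i : ι, R₂ i ⊗ₜ[k] R₁ i) * ((Algebra.TensorProduct.comm k U U) (comul (R := k) x) *
          (∑ i : ι, R₁ i ⊗ₜ[k] R₂ i)) := by rw [mul_assoc]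
    _ = (∑ i : ι, R₂ i ⊗ₜ[k] R₁ i) * ((∑ i : ι, R₁ i ⊗ₜ[k] R₂ i) * comul (R := k) x) := by
        rw [← E1 x]
    _ = ((∑ i : ι, R₂ i ⊗ₜ[k] R₁ i) * (∑ i : ι, R₁ i ⊗ₜ[k] R₂ i)) * comul (R := k) x := by
        rw [mul_assoc]


lemma G2 (R₁ R₂ : ι → U)
    (hcomm : ∀ (x : U) {κ : Type*} (r : Coalgebra.Repr k x κ),
      ∑ i : ι, ∑ m ∈ r.index, (R₁ i * r.left m) ⊗ₜ[k] (R₂ i * r.right m) =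
      ∑ i : ι, ∑ m ∈ r.index, (r.right m * R₁ i) ⊗ₜ[k] (r.left m * R₂ i))
    {h : U} {κ' : Type*} (r : Coalgebra.Repr k h κ') :
    ∑ m ∈ r.index, (aS (r.left m) ⊗ₜ[k] (1:U)) *
        (∑ i : ι, ∑ j : ι, (R₂ i * R₁ j) ⊗ₜ[k] (R₁ i * R₂ j)) * (r.right m ⊗ₜ[k] (1:U)) =
      ∑ m ∈ r.index, ((1:U) ⊗ₜ[k] r.left m) *
        (∑ i : ι, ∑ j : ι, (R₂ i * R₁ j) ⊗ₜ[k] (R₁ i * R₂ j)) * ((1:U) ⊗ₜ[k] aS (r.right m)) := by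
  classical
  set Q : U ⊗[k] U := ∑ i : ι, ∑ j : ι, (R₂ i * R₁ j) ⊗ₜ[k] (R₁ i * R₂ j) with hQdef
  have hstar : ∀ z : U, comul (R := k) z * Q = Q * comul (R := k) z :=
    star_comm R₁ R₂ hcomm
  have step1 : ∀ m ∈ r.index,
      (aS (r.left m) ⊗ₜ[k] (1:U)) * Q * (r.right m ⊗ₜ[k] (1:U)) =
      ∑ n ∈ (ℛ k (r.right m)).index,
        xiMap k Q (r.left m ⊗ₜ[k] ((ℛ k (r.right m)).left n ⊗ₜ[k] (ℛ k (r.right m)).right n)) := by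
    intro m _
    rw [show (r.right m ⊗ₜ[k] (1:U)) =
        ∑ n ∈ (ℛ k (r.right m)).index, comul (R := k) ((ℛ k (r.right m)).left n) *
          ((1:U) ⊗ₜ[k] aS ((ℛ k (r.right m)).right n)) from (L2 (ℛ k (r.right m))).symm]
    rw [Finset.mul_sum]
    refine Finset.sum_congr rfl fun n _ => ?_
    rw [xiMap_tmul, hstar ((ℛ k (r.right m)).left n)]
    simp only [mul_assoc]
  have step2 : ∀ m ∈ r.index,
      (∑ j ∈ (ℛ k (r.left m)).index,
        xiMap k Q ((ℛ k (r.left m)).left j ⊗ₜ[k] ((ℛ k (r.left m)).right j ⊗ₜ[k] r.right m))) =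
      ((1:U) ⊗ₜ[k] r.left m) * Q * ((1:U) ⊗ₜ[k] aS (r.right m)) := by
    intro m _
    simp only [xiMap_tmul]
    simp only [← mul_assoc]
    rw [← Finset.sum_mul, ← Finset.sum_mul, L3 (ℛ k (r.left m))]
  have hmid := congrArg (xiMap k Q)
    (sum_tmul_tmul_eq (R := k) r (fun m => ℛ k (r.left m)) (fun m => ℛ k (r.right m)))
  simp only [map_sum] at hmid
  calc ∑ m ∈ r.index, (aS (r.left m) ⊗ₜ[k] (1:U)) * Q * (r.right m ⊗ₜ[k] (1:U))
      = ∑ m ∈ r.index, ∑ n ∈ (ℛ k (r.right m)).index,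
          xiMap k Q (r.left m ⊗ₜ[k] ((ℛ k (r.right m)).left n ⊗ₜ[k] (ℛ k (r.right m)).right n)) :=
        Finset.sum_congr rfl step1
    _ = ∑ m ∈ r.index, ∑ j ∈ (ℛ k (r.left m)).index,
          xiMap k Q ((ℛ k (r.left m)).left j ⊗ₜ[k] ((ℛ k (r.left m)).right j ⊗ₜ[k] r.right m)) :=
        hmid.symm
    _ = ∑ m ∈ r.index, ((1:U) ⊗ₜ[k] r.left m) * Q * ((1:U) ⊗ₜ[k] aS (r.right m)) :=
        Finset.sum_congr rfl step2

lemma part2 (R₁ R₂ : ι → U)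
    (hcomm : ∀ (x : U) {κ : Type*} (r : Coalgebra.Repr k x κ),
      ∑ i : ι, ∑ m ∈ r.index, (R₁ i * r.left m) ⊗ₜ[k] (R₂ i * r.right m) =
      ∑ i : ι, ∑ m ∈ r.index, (r.right m * R₁ i) ⊗ₜ[k] (r.left m * R₂ i))
    (h : U) (φ : Module.Dual k U) {κ' : Type*} (r : Coalgebra.Repr k h κ') :
    ∑ m ∈ r.index, r.left m * drinfeldMap R₁ R₂ φ * aS (r.right m) =
      drinfeldMap R₁ R₂ (∑ m ∈ r.index,
        φ ∘ₗ LinearMap.mulLeft k (aS (r.left m)) ∘ₗ LinearMap.mulRight k (r.right m)) := by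
  classical
  have g2 := G2 R₁ R₂ hcomm r
  have lexp : ∀ c d : U, (aS c ⊗ₜ[k] (1:U)) *
      (∑ i : ι, ∑ j : ι, (R₂ i * R₁ j) ⊗ₜ[k] (R₁ i * R₂ j)) * (d ⊗ₜ[k] (1:U)) =
      ∑ i : ι, ∑ j : ι, (aS c * (R₂ i * R₁ j) * d) ⊗ₜ[k] (R₁ i * R₂ j) := by
    intro c d
    simp [Finset.mul_sum, Finset.sum_mul, Algebra.TensorProduct.tmul_mul_tmul]
  have rexp : ∀ c d : U, ((1:U) ⊗ₜ[k] c) *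
      (∑ i : ι, ∑ j : ι, (R₂ i * R₁ j) ⊗ₜ[k] (R₁ i * R₂ j)) * ((1:U) ⊗ₜ[k] aS d) =
      ∑ i : ι, ∑ j : ι, (R₂ i * R₁ j) ⊗ₜ[k] (c * (R₁ i * R₂ j) * aS d) := by
    intro c d
    simp [Finset.mul_sum, Finset.sum_mul, Algebra.TensorProduct.tmul_mul_tmul]
  simp only [lexp, rexp] at g2
  have g2' := congrArg ((TensorProduct.lid k U).toLinearMap ∘ₗ
    TensorProduct.map φ (LinearMap.id (R := k) (M := U))) g2
  simp only [map_sum, LinearMap.coe_comp, Function.comp_apply, TensorProduct.map_tmul,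
    LinearMap.id_coe, id_eq, LinearEquiv.coe_coe, TensorProduct.lid_tmul] at g2'
  unfold drinfeldMap
  simp only [Finset.mul_sum, Finset.sum_mul, mul_smul_comm, smul_mul_assoc,
    LinearMap.coe_sum, Finset.sum_apply, LinearMap.coe_comp, Function.comp_apply,
    LinearMap.mulLeft_apply, LinearMap.mulRight_apply, Finset.sum_smul]
  simp only [mul_assoc] at g2' ⊢
  rw [← g2']
  rw [Finset.sum_comm]
  exact Finset.sum_congr rfl fun i _ => Finset.sum_comm

lemma sum3_mul {A : Type*} [NonUnitalNonAssocSemiring A] (a b c : ι → A) :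
    (∑ i : ι, a i) * (∑ j : ι, b j) * (∑ l : ι, c l) =
      ∑ i : ι, ∑ j : ι, ∑ l : ι, a i * b j * c l := by
  simp only [Finset.sum_mul, Finset.mul_sum]
  rw [Finset.sum_comm]
  exact (Finset.sum_congr rfl fun j _ => Finset.sum_comm).trans Finset.sum_comm

section Part1

variable (R₁ R₂ : ι → U)

noncomputable def r12 : U ⊗[k] (U ⊗[k] U) := ∑ i : ι, R₁ i ⊗ₜ[k] (R₂ i ⊗ₜ[k] (1:U))
noncomputable def r13 : U ⊗[k] (U ⊗[k] U) := ∑ i : ι, R₁ i ⊗ₜ[k] ((1:U) ⊗ₜ[k] R₂ i)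
noncomputable def r23 : U ⊗[k] (U ⊗[k] U) := ∑ i : ι, (1:U) ⊗ₜ[k] (R₁ i ⊗ₜ[k] R₂ i)
noncomputable def r21_13 : U ⊗[k] (U ⊗[k] U) := ∑ i : ι, R₂ i ⊗ₜ[k] ((1:U) ⊗ₜ[k] R₁ i)
noncomputable def r21_23 : U ⊗[k] (U ⊗[k] U) := ∑ i : ι, (1:U) ⊗ₜ[k] (R₂ i ⊗ₜ[k] R₁ i)
noncomputable def s2e (i : ι) : U ⊗[k] (U ⊗[k] U) :=
  (1:U) ⊗ₜ[k] (HopfAlgebra.antipode (R := k) (R₂ i) ⊗ₜ[k] (1:U))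
noncomputable def e1e (i : ι) : U ⊗[k] (U ⊗[k] U) := R₁ i ⊗ₜ[k] ((1:U) ⊗ₜ[k] (1:U))
noncomputable def vEl : U := ∑ i : ι, (counit (R := k) (R₂ i)) • R₁ i

local notation "𝔯12" => r12 (k := k) R₁ R₂
local notation "𝔯13" => r13 (k := k) R₁ R₂
local notation "𝔯23" => r23 (k := k) R₁ R₂
local notation "𝔮13" => r21_13 (k := k) R₁ R₂
local notation "𝔮23" => r21_23 (k := k) R₁ R₂
local notation "𝔰" => s2e (k := k) R₂
local notation "𝔢" => e1e (k := k) R₁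

lemma Y5 (hybe : ∑ i : ι, ∑ j : ι, ∑ l : ι,
        (R₁ i * R₁ j) ⊗ₜ[k] ((R₂ i * R₁ l) ⊗ₜ[k] (R₂ j * R₂ l)) =
      ∑ i : ι, ∑ j : ι, ∑ l : ι,
        (R₁ j * R₁ l) ⊗ₜ[k] ((R₁ i * R₂ l) ⊗ₜ[k] (R₂ i * R₂ j))) :
    𝔯12 * 𝔮23 * 𝔮13 = 𝔮13 * 𝔮23 * 𝔯12 := by
  have hσ := congrArg ((TensorProduct.assoc k U U U).toLinearMap ∘ₗ
    (TensorProduct.comm k U (U ⊗[k] U)).toLinearMap) hybe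
  simp only [map_sum, LinearMap.coe_comp, Function.comp_apply, LinearEquiv.coe_coe,
    TensorProduct.comm_tmul, TensorProduct.assoc_tmul] at hσ
  have e1 : 𝔯12 * 𝔮23 * 𝔮13 = ∑ i : ι, ∑ j : ι, ∑ l : ι,
      (R₁ i * R₂ l) ⊗ₜ[k] ((R₂ i * R₂ j) ⊗ₜ[k] (R₁ j * R₁ l)) := by
    rw [r12, r21_23, r21_13, sum3_mul]
    simp only [Algebra.TensorProduct.tmul_mul_tmul, one_mul, mul_one]
  have e2 : 𝔮13 * 𝔮23 * 𝔯12 = ∑ i : ι, ∑ j : ι, ∑ l : ι,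
      (R₂ i * R₁ l) ⊗ₜ[k] ((R₂ j * R₂ l) ⊗ₜ[k] (R₁ i * R₁ j)) := by
    rw [r12, r21_23, r21_13, sum3_mul]
    simp only [Algebra.TensorProduct.tmul_mul_tmul, one_mul, mul_one]
  rw [e1, e2]
  exact hσ.symm

lemma Yp (hybe : ∑ i : ι, ∑ j : ι, ∑ l : ι,
        (R₁ i * R₁ j) ⊗ₜ[k] ((R₂ i * R₁ l) ⊗ₜ[k] (R₂ j * R₂ l)) =
      ∑ i : ι, ∑ j : ι, ∑ l : ι,
        (R₁ j * R₁ l) ⊗ₜ[k] ((R₁ i * R₂ l) ⊗ₜ[k] (R₂ i * R₂ j))) :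
    𝔮23 * 𝔯12 * 𝔯13 = 𝔯13 * 𝔯12 * 𝔮23 := by
  have hτ := congrArg (LinearMap.lTensor U (TensorProduct.comm k U U).toLinearMap) hybe
  simp only [map_sum, LinearMap.lTensor_tmul, LinearEquiv.coe_coe,
    TensorProduct.comm_tmul] at hτ
  have e1 : 𝔮23 * 𝔯12 * 𝔯13 = ∑ i : ι, ∑ j : ι, ∑ l : ι,
      (R₁ j * R₁ l) ⊗ₜ[k] ((R₂ i * R₂ j) ⊗ₜ[k] (R₁ i * R₂ l)) := by
    rw [r12, r13, r21_23, sum3_mul]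
    simp only [Algebra.TensorProduct.tmul_mul_tmul, one_mul, mul_one]
  have e2 : 𝔯13 * 𝔯12 * 𝔮23 = ∑ i : ι, ∑ j : ι, ∑ l : ι,
      (R₁ i * R₁ j) ⊗ₜ[k] ((R₂ j * R₂ l) ⊗ₜ[k] (R₂ i * R₁ l)) := by
    rw [r12, r13, r21_23, sum3_mul]
    simp only [Algebra.TensorProduct.tmul_mul_tmul, one_mul, mul_one]
  rw [e1, e2]
  exact hτ.symm

lemma DL (hdl : ∀ (κ : ι → Type*) (r : ∀ i : ι, Coalgebra.Repr k (R₁ i) (κ i)),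
      ∑ i : ι, ∑ m ∈ (r i).index, ((r i).left m ⊗ₜ[k] (r i).right m) ⊗ₜ[k] R₂ i =
      ∑ i : ι, ∑ j : ι, (R₁ i ⊗ₜ[k] R₁ j) ⊗ₜ[k] (R₂ i * R₂ j)) :
    ∑ i : ι, (Algebra.TensorProduct.assoc k k k U U U) (comul (R := k) (R₁ i) ⊗ₜ[k] R₂ i) =
      𝔯13 * 𝔯23 := by
  have hL : ∑ i : ι, (comul (R := k) (R₁ i)) ⊗ₜ[k] R₂ i =
      ∑ i : ι, ∑ j : ι, (R₁ i ⊗ₜ[k] R₁ j) ⊗ₜ[k] (R₂ i * R₂ j) := by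
    refine Eq.trans ?_ (hdl _ (fun i => reprShrink (ℛ k (R₁ i))))
    refine Finset.sum_congr rfl fun i _ => ?_
    rw [← (reprShrink (ℛ k (R₁ i)) : Coalgebra.Repr k (R₁ i) _).eq, sum_tmul]
  have h2 := congrArg (Algebra.TensorProduct.assoc k k k U U U).toLinearMap hL
  simp only [map_sum, AlgEquiv.toLinearMap_apply, Algebra.TensorProduct.assoc_tmul] at h2
  rw [r13, r23, Finset.sum_mul_sum]
  simp only [Algebra.TensorProduct.tmul_mul_tmul, one_mul, mul_one]
  exact h2

lemma DR (hdr : ∀ (κ : ι → Type*) (r : ∀ i : ι, Coalgebra.Repr k (R₂ i) (κ i)),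
      ∑ i : ι, ∑ m ∈ (r i).index, R₁ i ⊗ₜ[k] ((r i).left m ⊗ₜ[k] (r i).right m) =
      ∑ i : ι, ∑ j : ι, (R₁ i * R₁ j) ⊗ₜ[k] (R₂ j ⊗ₜ[k] R₂ i)) :
    ∑ i : ι, (Algebra.TensorProduct.assoc k k k U U U) (comul (R := k) (R₂ i) ⊗ₜ[k] R₁ i) =
      𝔮23 * 𝔮13 := by
  have hL : ∑ i : ι, R₁ i ⊗ₜ[k] (comul (R := k) (R₂ i)) =
      ∑ i : ι, ∑ j : ι, (R₁ i * R₁ j) ⊗ₜ[k] (R₂ j ⊗ₜ[k] R₂ i) := by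
    refine Eq.trans ?_ (hdr _ (fun i => reprShrink (ℛ k (R₂ i))))
    refine Finset.sum_congr rfl fun i _ => ?_
    rw [← (reprShrink (ℛ k (R₂ i)) : Coalgebra.Repr k (R₂ i) _).eq, tmul_sum]
  have h2 := congrArg ((Algebra.TensorProduct.assoc k k k U U U).toLinearMap ∘ₗ
    (TensorProduct.comm k U (U ⊗[k] U)).toLinearMap) hL
  simp only [map_sum, LinearMap.coe_comp, Function.comp_apply, LinearEquiv.coe_coe,
    TensorProduct.comm_tmul, AlgEquiv.toLinearMap_apply, Algebra.TensorProduct.assoc_tmul] at h2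
  rw [r21_23, r21_13, Finset.sum_mul_sum]
  simp only [Algebra.TensorProduct.tmul_mul_tmul, one_mul, mul_one]
  exact h2

lemma Kc (hdr : ∀ (κ : ι → Type*) (r : ∀ i : ι, Coalgebra.Repr k (R₂ i) (κ i)),
      ∑ i : ι, ∑ m ∈ (r i).index, R₁ i ⊗ₜ[k] ((r i).left m ⊗ₜ[k] (r i).right m) =
      ∑ i : ι, ∑ j : ι, (R₁ i * R₁ j) ⊗ₜ[k] (R₂ j ⊗ₜ[k] R₂ i)) :
    ∑ i : ι, ∑ j : ι, (R₁ i * R₁ j) ⊗ₜ[k]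
        (HopfAlgebra.antipode (R := k) (R₂ j) * R₂ i) =
      (∑ i : ι, (counit (R := k) (R₂ i)) • R₁ i) ⊗ₜ[k] (1:U) := by
  have h2 := congrArg (LinearMap.lTensor U
    (LinearMap.mul' k U ∘ₗ (HopfAlgebra.antipode (R := k)).rTensor U))
    (hdr _ (fun i => reprShrink (ℛ k (R₂ i))))
  simp only [map_sum, LinearMap.lTensor_tmul, LinearMap.coe_comp, Function.comp_apply,
    LinearMap.rTensor_tmul, LinearMap.mul'_apply] at h2
  refine Eq.trans h2.symm ?_
  rw [sum_tmul]
  refine Finset.sum_congr rfl fun i _ => ?_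
  rw [← tmul_sum, HopfAlgebra.sum_antipode_mul_eq_smul, tmul_smul, smul_tmul']

lemma K2c (hdr : ∀ (κ : ι → Type*) (r : ∀ i : ι, Coalgebra.Repr k (R₂ i) (κ i)),
      ∑ i : ι, ∑ m ∈ (r i).index, R₁ i ⊗ₜ[k] ((r i).left m ⊗ₜ[k] (r i).right m) =
      ∑ i : ι, ∑ j : ι, (R₁ i * R₁ j) ⊗ₜ[k] (R₂ j ⊗ₜ[k] R₂ i)) :
    ∑ i : ι, ∑ j : ι, (R₁ i * R₁ j) ⊗ₜ[k] ((counit (R := k) (R₂ j)) • R₂ i) =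
      ∑ i : ι, R₁ i ⊗ₜ[k] R₂ i := by
  have h2 := congrArg (LinearMap.lTensor U
    ((TensorProduct.lid k U).toLinearMap ∘ₗ (counit (R := k) (A := U)).rTensor U))
    (hdr _ (fun i => reprShrink (ℛ k (R₂ i))))
  simp only [map_sum, LinearMap.lTensor_tmul, LinearMap.coe_comp, Function.comp_apply,
    LinearMap.rTensor_tmul, LinearEquiv.coe_coe, TensorProduct.lid_tmul] at h2
  refine Eq.trans h2.symm ?_
  refine Finset.sum_congr rfl fun i _ => ?_
  rw [← tmul_sum]
  congr 1
  exact sum_counit_left_smul (reprShrink (ℛ k (R₂ i)))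

lemma Klift (hdr : ∀ (κ : ι → Type*) (r : ∀ i : ι, Coalgebra.Repr k (R₂ i) (κ i)),
      ∑ i : ι, ∑ m ∈ (r i).index, R₁ i ⊗ₜ[k] ((r i).left m ⊗ₜ[k] (r i).right m) =
      ∑ i : ι, ∑ j : ι, (R₁ i * R₁ j) ⊗ₜ[k] (R₂ j ⊗ₜ[k] R₂ i)) :
    ∑ i : ι, 𝔰 i * (𝔯12 * 𝔢 i) =
      (∑ i : ι, (counit (R := k) (R₂ i)) • R₁ i) ⊗ₜ[k] ((1:U) ⊗ₜ[k] (1:U)) := by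
  have hK := congrArg (LinearMap.lTensor U ((TensorProduct.mk k U U).flip (1:U)))
    (Kc R₁ R₂ hdr)
  simp only [map_sum, LinearMap.lTensor_tmul, LinearMap.flip_apply, TensorProduct.mk_apply] at hK
  calc ∑ i : ι, 𝔰 i * (𝔯12 * 𝔢 i)
      = ∑ i : ι, ∑ j : ι, (R₁ j * R₁ i) ⊗ₜ[k]
          ((HopfAlgebra.antipode (R := k) (R₂ i) * R₂ j) ⊗ₜ[k] (1:U)) := by
        refine Finset.sum_congr rfl fun i _ => ?_
        rw [s2e, r12, e1e, Finset.sum_mul, Finset.mul_sum]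
        simp only [Algebra.TensorProduct.tmul_mul_tmul, one_mul, mul_one]
    _ = ∑ j : ι, ∑ i : ι, (R₁ j * R₁ i) ⊗ₜ[k]
          ((HopfAlgebra.antipode (R := k) (R₂ i) * R₂ j) ⊗ₜ[k] (1:U)) := Finset.sum_comm
    _ = (∑ i : ι, (counit (R := k) (R₂ i)) • R₁ i) ⊗ₜ[k] ((1:U) ⊗ₜ[k] (1:U)) := hK

lemma K2lift (hdr : ∀ (κ : ι → Type*) (r : ∀ i : ι, Coalgebra.Repr k (R₂ i) (κ i)),
      ∑ i : ι, ∑ m ∈ (r i).index, R₁ i ⊗ₜ[k] ((r i).left m ⊗ₜ[k] (r i).right m) =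
      ∑ i : ι, ∑ j : ι, (R₁ i * R₁ j) ⊗ₜ[k] (R₂ j ⊗ₜ[k] R₂ i)) :
    𝔯13 * ((∑ i : ι, (counit (R := k) (R₂ i)) • R₁ i) ⊗ₜ[k] ((1:U) ⊗ₜ[k] (1:U))) = 𝔯13 := by
  have hK := congrArg (LinearMap.lTensor U (TensorProduct.mk k U U (1:U))) (K2c R₁ R₂ hdr)
  simp only [map_sum, LinearMap.lTensor_tmul, TensorProduct.mk_apply] at hK
  rw [r13, Finset.sum_mul]
  refine Eq.trans ?_ hK
  refine Finset.sum_congr rfl fun i _ => ?_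
  rw [sum_tmul, Finset.mul_sum]
  refine Finset.sum_congr rfl fun j _ => ?_
  rw [← smul_tmul', mul_smul_comm]
  simp only [Algebra.TensorProduct.tmul_mul_tmul, one_mul, mul_one, tmul_smul]

lemma comm1 (i : ι) : 𝔰 i * 𝔮13 = 𝔮13 * 𝔰 i := by
  simp [s2e, r21_13, Finset.mul_sum, Finset.sum_mul, Algebra.TensorProduct.tmul_mul_tmul]

lemma comm2 (i : ι) : 𝔰 i * 𝔯13 = 𝔯13 * 𝔰 i := by
  simp [s2e, r13, Finset.mul_sum, Finset.sum_mul, Algebra.TensorProduct.tmul_mul_tmul]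

lemma comm3 (i : ι) : 𝔮23 * 𝔢 i = 𝔢 i * 𝔮23 := by
  simp [e1e, r21_23, Finset.mul_sum, Finset.sum_mul, Algebra.TensorProduct.tmul_mul_tmul]

lemma comm4 (i : ι) : 𝔯23 * 𝔢 i = 𝔢 i * 𝔯23 := by
  simp [e1e, r23, Finset.mul_sum, Finset.sum_mul, Algebra.TensorProduct.tmul_mul_tmul]

lemma main1
    (hybe : ∑ i : ι, ∑ j : ι, ∑ l : ι,
        (R₁ i * R₁ j) ⊗ₜ[k] ((R₂ i * R₁ l) ⊗ₜ[k] (R₂ j * R₂ l)) =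
      ∑ i : ι, ∑ j : ι, ∑ l : ι,
        (R₁ j * R₁ l) ⊗ₜ[k] ((R₁ i * R₂ l) ⊗ₜ[k] (R₂ i * R₂ j)))
    (hdr : ∀ (κ : ι → Type*) (r : ∀ i : ι, Coalgebra.Repr k (R₂ i) (κ i)),
      ∑ i : ι, ∑ m ∈ (r i).index, R₁ i ⊗ₜ[k] ((r i).left m ⊗ₜ[k] (r i).right m) =
      ∑ i : ι, ∑ j : ι, (R₁ i * R₁ j) ⊗ₜ[k] (R₂ j ⊗ₜ[k] R₂ i)) :
    ∑ i : ι, 𝔰 i * (𝔯12 * (((𝔮23 * 𝔮13) * (𝔯13 * 𝔯23)) * 𝔢 i)) =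
      (𝔮13 * 𝔯13) * (𝔮23 * 𝔯23) := by
  have Y5' := Y5 R₁ R₂ hybe
  have Yp' := Yp R₁ R₂ hybe
  have hY5X : ∀ X : U ⊗[k] (U ⊗[k] U),
      𝔯12 * (𝔮23 * (𝔮13 * X)) = 𝔮13 * (𝔮23 * (𝔯12 * X)) := by
    intro X; rw [← mul_assoc, ← mul_assoc, Y5', mul_assoc, mul_assoc]
  have hYpX : ∀ X : U ⊗[k] (U ⊗[k] U),
      𝔮23 * (𝔯12 * (𝔯13 * X)) = 𝔯13 * (𝔯12 * (𝔮23 * X)) := by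
    intro X; rw [← mul_assoc, ← mul_assoc, Yp', mul_assoc, mul_assoc]
  have hc1X : ∀ (i : ι) (X : U ⊗[k] (U ⊗[k] U)),
      𝔰 i * (𝔮13 * X) = 𝔮13 * (𝔰 i * X) := by
    intro i X; rw [← mul_assoc, comm1, mul_assoc]
  have hc2X : ∀ (i : ι) (X : U ⊗[k] (U ⊗[k] U)),
      𝔰 i * (𝔯13 * X) = 𝔯13 * (𝔰 i * X) := by
    intro i X; rw [← mul_assoc, comm2, mul_assoc]
  have hc3X : ∀ i : ι, 𝔮23 * (𝔯23 * 𝔢 i) = 𝔢 i * (𝔮23 * 𝔯23) := by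
    intro i; rw [comm4, ← mul_assoc, comm3, mul_assoc]
  calc ∑ i : ι, 𝔰 i * (𝔯12 * (((𝔮23 * 𝔮13) * (𝔯13 * 𝔯23)) * 𝔢 i))
      = ∑ i : ι, 𝔮13 * (𝔯13 * ((𝔰 i * (𝔯12 * 𝔢 i)) * (𝔮23 * 𝔯23))) := by
        refine Finset.sum_congr rfl fun i _ => ?_
        simp only [mul_assoc]
        rw [hY5X, hc1X, hYpX, hc2X, hc3X]
    _ = 𝔮13 * (𝔯13 * ((∑ i : ι, 𝔰 i * (𝔯12 * 𝔢 i)) * (𝔮23 * 𝔯23))) := by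
        rw [Finset.sum_mul, Finset.mul_sum, Finset.mul_sum]
    _ = 𝔮13 * (𝔯13 * (((∑ i : ι, (counit (R := k) (R₂ i)) • R₁ i) ⊗ₜ[k]
          ((1:U) ⊗ₜ[k] (1:U))) * (𝔮23 * 𝔯23))) := by rw [Klift R₁ R₂ hdr]
    _ = (𝔮13 * 𝔯13) * (𝔮23 * 𝔯23) := by
        rw [← mul_assoc (𝔯13), K2lift R₁ R₂ hdr, ← mul_assoc]

variable (φ ψ : Module.Dual k U) in
noncomputable def F3 : U ⊗[k] (U ⊗[k] U) →ₗ[k] U :=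
  ((TensorProduct.lid k U).toLinearMap ∘ₗ TensorProduct.map φ LinearMap.id) ∘ₗ
    LinearMap.lTensor U ((TensorProduct.lid k U).toLinearMap ∘ₗ TensorProduct.map ψ LinearMap.id)

lemma F3_tmul (φ ψ : Module.Dual k U) (a b c : U) :
    F3 φ ψ (a ⊗ₜ[k] (b ⊗ₜ[k] c)) = φ a • (ψ b • c) := by
  simp [F3]
  rw [smul_comm]

lemma bridgeTerm (φ ψ : Module.Dual k U) (x y : U) :
    ((transmuteMul R₁ R₂ φ ψ) x) • y =
      F3 φ ψ (∑ i : ι, 𝔰 i * (𝔯12 *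
        ((Algebra.TensorProduct.assoc k k k U U U) (comul (R := k) x ⊗ₜ[k] y) * 𝔢 i))) := by
  classical
  have hL : ((transmuteMul R₁ R₂ φ ψ) x) • y = ∑ i : ι, ∑ j : ι, ∑ n ∈ (ℛ k x).index,
      (φ (R₁ j * ((ℛ k x).left n * R₁ i)) *
        ψ ((HopfAlgebra.antipode (R := k) (R₂ i) * R₂ j) * (ℛ k x).right n)) • y := by
    rw [transmuteMul]
    simp only [LinearMap.coe_sum, Finset.sum_apply, convDual, LinearMap.coe_comp,
      Function.comp_apply]
    rw [← (ℛ k x).eq]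
    simp only [map_sum, TensorProduct.map_tmul, LinearMap.coe_comp, Function.comp_apply,
      LinearMap.mulLeft_apply, LinearMap.mulRight_apply, LinearMap.mul'_apply,
      Finset.sum_smul]
  have hR : (∑ i : ι, 𝔰 i * (𝔯12 *
        ((Algebra.TensorProduct.assoc k k k U U U) (comul (R := k) x ⊗ₜ[k] y) * 𝔢 i))) =
      ∑ i : ι, ∑ j : ι, ∑ n ∈ (ℛ k x).index,
        (R₁ j * ((ℛ k x).left n * R₁ i)) ⊗ₜ[k]
          ((HopfAlgebra.antipode (R := k) (R₂ i) * (R₂ j * (ℛ k x).right n)) ⊗ₜ[k] y) := by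
    refine Finset.sum_congr rfl fun i _ => ?_
    rw [← (ℛ k x).eq, sum_tmul, map_sum, Finset.sum_mul, Finset.mul_sum, Finset.mul_sum]
    have hn : ∀ n ∈ (ℛ k x).index, s2e (k := k) R₂ i * (r12 (k := k) R₁ R₂ *
        ((Algebra.TensorProduct.assoc k k k U U U)
          (((ℛ k x).left n ⊗ₜ[k] (ℛ k x).right n) ⊗ₜ[k] y) * e1e (k := k) R₁ i)) =
        ∑ j : ι, (R₁ j * ((ℛ k x).left n * R₁ i)) ⊗ₜ[k]
          ((HopfAlgebra.antipode (R := k) (R₂ i) * (R₂ j * (ℛ k x).right n)) ⊗ₜ[k] y) := by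
      intro n _
      rw [r12, Finset.sum_mul, Finset.mul_sum]
      refine Finset.sum_congr rfl fun j _ => ?_
      simp only [Algebra.TensorProduct.assoc_tmul, s2e, e1e,
        Algebra.TensorProduct.tmul_mul_tmul, one_mul, mul_one]
    rw [Finset.sum_congr rfl hn]
    exact Finset.sum_comm
  rw [hL, hR]
  simp only [map_sum, F3_tmul]
  refine Finset.sum_congr rfl fun i _ => Finset.sum_congr rfl fun j _ =>
    Finset.sum_congr rfl fun n _ => ?_
  rw [mul_smul, mul_assoc]

lemma part1 (φ ψ : Module.Dual k U)
    (hdl : ∀ (κ : ι → Type*) (r : ∀ i : ι, Coalgebra.Repr k (R₁ i) (κ i)),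
      ∑ i : ι, ∑ m ∈ (r i).index, ((r i).left m ⊗ₜ[k] (r i).right m) ⊗ₜ[k] R₂ i =
      ∑ i : ι, ∑ j : ι, (R₁ i ⊗ₜ[k] R₁ j) ⊗ₜ[k] (R₂ i * R₂ j))
    (hdr : ∀ (κ : ι → Type*) (r : ∀ i : ι, Coalgebra.Repr k (R₂ i) (κ i)),
      ∑ i : ι, ∑ m ∈ (r i).index, R₁ i ⊗ₜ[k] ((r i).left m ⊗ₜ[k] (r i).right m) =
      ∑ i : ι, ∑ j : ι, (R₁ i * R₁ j) ⊗ₜ[k] (R₂ j ⊗ₜ[k] R₂ i))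
    (hybe : ∑ i : ι, ∑ j : ι, ∑ l : ι,
        (R₁ i * R₁ j) ⊗ₜ[k] ((R₂ i * R₁ l) ⊗ₜ[k] (R₂ j * R₂ l)) =
      ∑ i : ι, ∑ j : ι, ∑ l : ι,
        (R₁ j * R₁ l) ⊗ₜ[k] ((R₁ i * R₂ l) ⊗ₜ[k] (R₂ i * R₂ j))) :
    drinfeldMap R₁ R₂ (transmuteMul R₁ R₂ φ ψ) =
      drinfeldMap R₁ R₂ φ * drinfeldMap R₁ R₂ ψ := by
  classical
  have hDQ : ∑ p : ι, ∑ q : ι, (Algebra.TensorProduct.assoc k k k U U U)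
        (comul (R := k) (R₂ p * R₁ q) ⊗ₜ[k] (R₁ p * R₂ q)) =
      (𝔮23 * 𝔮13) * (𝔯13 * 𝔯23) := by
    have hpq : ∀ p q : ι, (Algebra.TensorProduct.assoc k k k U U U)
        (comul (R := k) (R₂ p * R₁ q) ⊗ₜ[k] (R₁ p * R₂ q)) =
        (Algebra.TensorProduct.assoc k k k U U U) (comul (R := k) (R₂ p) ⊗ₜ[k] R₁ p) *
        (Algebra.TensorProduct.assoc k k k U U U) (comul (R := k) (R₁ q) ⊗ₜ[k] R₂ q) := by
      intro p q
      rw [Bialgebra.comul_mul, ← Algebra.TensorProduct.tmul_mul_tmul, map_mul]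
    rw [Finset.sum_congr rfl (fun p _ => Finset.sum_congr rfl (fun q _ => hpq p q))]
    rw [← Finset.sum_mul_sum]
    rw [DR R₁ R₂ hdr, DL R₁ R₂ hdl]
  have hmain := main1 R₁ R₂ hybe hdr
  calc drinfeldMap R₁ R₂ (transmuteMul R₁ R₂ φ ψ)
      = ∑ p : ι, ∑ q : ι, F3 φ ψ (∑ i : ι, 𝔰 i * (𝔯12 *
          ((Algebra.TensorProduct.assoc k k k U U U)
            (comul (R := k) (R₂ p * R₁ q) ⊗ₜ[k] (R₁ p * R₂ q)) * 𝔢 i))) := by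
        rw [drinfeldMap]
        exact Finset.sum_congr rfl fun p _ => Finset.sum_congr rfl fun q _ =>
          bridgeTerm R₁ R₂ φ ψ _ _
    _ = F3 φ ψ (∑ i : ι, 𝔰 i * (𝔯12 * ((∑ p : ι, ∑ q : ι,
          (Algebra.TensorProduct.assoc k k k U U U)
            (comul (R := k) (R₂ p * R₁ q) ⊗ₜ[k] (R₁ p * R₂ q))) * 𝔢 i))) := by
        simp only [Finset.sum_mul, Finset.mul_sum, map_sum]
        exact (Finset.sum_congr rfl fun p _ => Finset.sum_comm).trans Finset.sum_comm
    _ = F3 φ ψ ((𝔮13 * 𝔯13) * (𝔮23 * 𝔯23)) := by rw [hDQ, hmain]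
    _ = drinfeldMap R₁ R₂ φ * drinfeldMap R₁ R₂ ψ := by
        have h1 : 𝔮13 * 𝔯13 = ∑ i : ι, ∑ j : ι,
            (R₂ i * R₁ j) ⊗ₜ[k] ((1:U) ⊗ₜ[k] (R₁ i * R₂ j)) := by
          rw [r21_13, r13, Finset.sum_mul_sum]
          simp only [Algebra.TensorProduct.tmul_mul_tmul, one_mul, mul_one]
        have h2 : 𝔮23 * 𝔯23 = ∑ i : ι, ∑ j : ι,
            (1:U) ⊗ₜ[k] ((R₂ i * R₁ j) ⊗ₜ[k] (R₁ i * R₂ j)) := by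
          rw [r21_23, r23, Finset.sum_mul_sum]
          simp only [Algebra.TensorProduct.tmul_mul_tmul, one_mul, mul_one]
        rw [h1, h2, drinfeldMap, drinfeldMap]
        simp only [Finset.sum_mul, Finset.mul_sum, map_sum,
          Algebra.TensorProduct.tmul_mul_tmul, one_mul, mul_one, F3_tmul,
          smul_mul_assoc, mul_smul_comm, Finset.smul_sum]
        refine Finset.sum_congr rfl fun a _ => Finset.sum_congr rfl fun b _ =>
          Finset.sum_congr rfl fun c _ => Finset.sum_congr rfl fun d _ => smul_comm _ _ _

end Part1

end DrinfeldPf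

/-- Let `U` be a quasitriangular Hopf algebra over a field `k`, with
R-matrix `R = ∑ᵢ R'ᵢ ⊗ R''ᵢ` satisfying `(Δ ⊗ id)(R) = R₁₃R₂₃`, `(id ⊗ Δ)(R) = R₁₃R₁₂`,
`R Δ(x) = Δᵒᵖ(x) R` and the Yang–Baxter equation.  Then the Drinfeld map
`Φ(φ) = (φ ⊗ id)(R₂₁R)` is an algebra morphism from the transmutation product `⊙` to the
product of `U`:  `Φ(φ ⊙ ψ) = Φ(φ)Φ(ψ)`; moreover `Φ` intertwines the coadjoint action on
the dual with the adjoint action:  `Φ(h₍₂₎ ▷ φ ◁ S(h₍₁₎)) = h₍₁₎ Φ(φ) S(h₍₂₎)`. -/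
theorem drinfeldMap_transmutation (R₁ R₂ : ι → U)
    -- `R Δ(x) = Δᵒᵖ(x) R`:
    (ax_comm : ∀ (x : U) {κ : Type*} (r : Coalgebra.Repr k x κ),
      ∑ i : ι, ∑ m ∈ r.index, (R₁ i * r.left m) ⊗ₜ[k] (R₂ i * r.right m) =
      ∑ i : ι, ∑ m ∈ r.index, (r.right m * R₁ i) ⊗ₜ[k] (r.left m * R₂ i))
    -- `(Δ ⊗ id)(R) = R₁₃ R₂₃`:
    (ax_delta_left : ∀ (κ : ι → Type*) (r : ∀ i : ι, Coalgebra.Repr k (R₁ i) (κ i)),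
      ∑ i : ι, ∑ m ∈ (r i).index, ((r i).left m ⊗ₜ[k] (r i).right m) ⊗ₜ[k] R₂ i =
      ∑ i : ι, ∑ j : ι, (R₁ i ⊗ₜ[k] R₁ j) ⊗ₜ[k] (R₂ i * R₂ j))
    -- `(id ⊗ Δ)(R) = R₁₃ R₁₂`:
    (ax_delta_right : ∀ (κ : ι → Type*) (r : ∀ i : ι, Coalgebra.Repr k (R₂ i) (κ i)),
      ∑ i : ι, ∑ m ∈ (r i).index, R₁ i ⊗ₜ[k] ((r i).left m ⊗ₜ[k] (r i).right m) =
      ∑ i : ι, ∑ j : ι, (R₁ i * R₁ j) ⊗ₜ[k] (R₂ j ⊗ₜ[k] R₂ i))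
    -- Yang–Baxter equation `R₁₂ R₁₃ R₂₃ = R₂₃ R₁₃ R₁₂`:
    (ax_ybe : ∑ i : ι, ∑ j : ι, ∑ l : ι,
        (R₁ i * R₁ j) ⊗ₜ[k] ((R₂ i * R₁ l) ⊗ₜ[k] (R₂ j * R₂ l)) =
      ∑ i : ι, ∑ j : ι, ∑ l : ι,
        (R₁ j * R₁ l) ⊗ₜ[k] ((R₁ i * R₂ l) ⊗ₜ[k] (R₂ i * R₂ j))) :
    (∀ φ ψ : Module.Dual k U,
      drinfeldMap R₁ R₂ (transmuteMul R₁ R₂ φ ψ) =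
        drinfeldMap R₁ R₂ φ * drinfeldMap R₁ R₂ ψ) ∧
    (∀ (h : U) (φ : Module.Dual k U) {κ : Type*} (r : Coalgebra.Repr k h κ),
      ∑ m ∈ r.index, r.left m * drinfeldMap R₁ R₂ φ *
          HopfAlgebra.antipode (R := k) (r.right m) =
        drinfeldMap R₁ R₂ (∑ m ∈ r.index,
          φ ∘ₗ LinearMap.mulLeft k (HopfAlgebra.antipode (R := k) (r.left m)) ∘ₗ
            LinearMap.mulRight k (r.right m))) := by
  constructor
  · intro φ ψ
    exact DrinfeldPf.part1 R₁ R₂ φ ψ ax_delta_left ax_delta_right ax_ybe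
  · intro h φ _ r
    exact DrinfeldPf.part2 R₁ R₂ ax_comm h φ r

end
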